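/- Every spherical tight frame of four unit vectors in R² is a union of two orthonormal bases: if f_1, f_2, f_3, f_4 are unit vectors in R² with Σ_j ⟨v,f_j⟩² = 2‖v‖² for all v ∈ R², then there is a partition of {1,2,3,4} into two pairs {i,j}, {p,q} such that f_j = ±f_i^⊥ and f_q = ±f_p^⊥ (i.e., each pair is orthonormal up to sign, equivalently any four unimodular complex numbers whose squares sum to zero split into two pairs of negatives of each other). -/

import Mathlib

/-- Every spherical tight frame of four unit vectors in `ℝ² ≅ ℂ` (i.e. four unimodular
complex numbers whose squares sum to zero) is the union of two orthonormal bases: the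
squares split into two pairs of negatives of each other. -/
theorem stmt18 (z : Fin 4 → ℂ) (hunit : ∀ j, ‖z j‖ = 1)
    (htight : ∑ j, (z j) ^ 2 = 0) :
    ∃ σ : Equiv.Perm (Fin 4),
      (z (σ 0)) ^ 2 = -(z (σ 1)) ^ 2 ∧ (z (σ 2)) ^ 2 = -(z (σ 3)) ^ 2 := by
  set a := z 0 ^ 2 with ha
  set b := z 1 ^ 2 with hb
  set c := z 2 ^ 2 with hc
  set d := z 3 ^ 2 with hd
  have hsum : a + b + c + d = 0 := by
    rw [Fin.sum_univ_four] at htight; exact htight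
  have hnorm : ∀ j : Fin 4, ‖z j ^ 2‖ = 1 := by
    intro j
    rw [norm_pow, hunit j, one_pow]
  have hne : ∀ j : Fin 4, z j ^ 2 ≠ 0 := by
    intro j h
    have := hnorm j
    rw [h] at this; simp at this
  have hinv : ∀ j : Fin 4, (z j ^ 2)⁻¹ = (starRingEnd ℂ) (z j ^ 2) := by
    intro j; exact Complex.inv_eq_conj (hnorm j)
  have hconjsum : a⁻¹ + b⁻¹ + c⁻¹ + d⁻¹ = 0 := by
    rw [ha, hb, hc, hd, hinv 0, hinv 1, hinv 2, hinv 3, ← map_add, ← map_add, ← map_add]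
    rw [← ha, ← hb, ← hc, ← hd, hsum, map_zero]
  have ha0 : a ≠ 0 := hne 0
  have hb0 : b ≠ 0 := hne 1
  have hc0 : c ≠ 0 := hne 2
  have hd0 : d ≠ 0 := hne 3
  have he3 : a*b*c + a*b*d + a*c*d + b*c*d = 0 := by
    field_simp at hconjsum
    linear_combination hconjsum
  have hprod : (a + b) * (a + c) * (a + d) = 0 := by
    linear_combination a^2 * hsum + he3
  rcases mul_eq_zero.mp hprod with h12 | h4
  · rcases mul_eq_zero.mp h12 with h2 | h3
    · -- a = -b, c = -d
      refine ⟨Equiv.refl _, ?_, ?_⟩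
      · simpa [← ha, ← hb, eq_neg_iff_add_eq_zero] using h2
      · simp only [Equiv.refl_apply, ← hc, ← hd, eq_neg_iff_add_eq_zero]
        linear_combination hsum - h2
    · -- a = -c, b = -d
      refine ⟨Equiv.swap 1 2, ?_, ?_⟩
      · have : (Equiv.swap 1 2 : Equiv.Perm (Fin 4)) 0 = 0 := by decide
        have h1 : (Equiv.swap 1 2 : Equiv.Perm (Fin 4)) 1 = 2 := by decide
        rw [this, h1, ← ha, ← hc, eq_neg_iff_add_eq_zero]
        linear_combination h3
      · have h2' : (Equiv.swap 1 2 : Equiv.Perm (Fin 4)) 2 = 1 := by decide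
        have h3' : (Equiv.swap 1 2 : Equiv.Perm (Fin 4)) 3 = 3 := by decide
        rw [h2', h3', ← hb, ← hd, eq_neg_iff_add_eq_zero]
        linear_combination hsum - h3
  · -- a = -d, b = -c
    refine ⟨Equiv.swap 1 3, ?_, ?_⟩
    · have h0 : (Equiv.swap 1 3 : Equiv.Perm (Fin 4)) 0 = 0 := by decide
      have h1 : (Equiv.swap 1 3 : Equiv.Perm (Fin 4)) 1 = 3 := by decide
      rw [h0, h1, ← ha, ← hd, eq_neg_iff_add_eq_zero]
      linear_combination h4
    · have h2 : (Equiv.swap 1 3 : Equiv.Perm (Fin 4)) 2 = 2 := by decide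
      have h3 : (Equiv.swap 1 3 : Equiv.Perm (Fin 4)) 3 = 1 := by decide
      rw [h2, h3, ← hc, ← hb, eq_neg_iff_add_eq_zero]
      linear_combination hsum - h4
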